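/- Consider normalized design, ‖ψ_j‖_n = 1 for all j. Let u > 0 and let J = {j_1,…,j_N} ⊆ {1,…,p} be a maximal u-packing set of {ψ_j}: ‖ψ_{j_k} − ψ_{j_l}‖_n ≥ u for all k ≠ l, and for every j ∈ {1,…,p} \ J there exists k with ‖ψ_j − ψ_{j_k}‖_n < u. Then for every S with J ⊆ S and S ≠ {1,…,p}, writing s := |S|, and every L ≥ 1, one has φ²(L,S) ≤ s·u². -/

import Mathlib

open Finset

noncomputable section

/-- Squared normalized norm: `‖v‖ₙ² = ‖v‖₂²/n`. -/
def nsq (n : ℕ) (v : Fin n → ℝ) : ℝ := (∑ i, v i ^ 2) / n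

/-- Normalized norm `‖v‖ₙ`. -/
def nnorm (n : ℕ) (v : Fin n → ℝ) : ℝ := Real.sqrt (nsq n v)

/-- `ℓ₁`-norm of a coefficient vector. -/
def l1 {p : ℕ} (β : Fin p → ℝ) : ℝ := ∑ j, |β j|

/-- `f_β := ∑ⱼ βⱼ ψⱼ`. -/
def fvec {n p : ℕ} (ψ : Fin p → Fin n → ℝ) (β : Fin p → ℝ) : Fin n → ℝ :=
  fun i => ∑ j, β j * ψ j i

/-- Restriction `β_S` of `β` to an index set `S`. -/
def restr {p : ℕ} (S : Finset (Fin p)) (β : Fin p → ℝ) : Fin p → ℝ :=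
  fun j => if j ∈ S then β j else 0

/-- Compatibility constant `φ²(L,S)`. -/
def phiSq {n p : ℕ} (ψ : Fin p → Fin n → ℝ) (L : ℝ) (S : Finset (Fin p)) : ℝ :=
  sInf {x : ℝ | ∃ β : Fin p → ℝ, l1 (restr S β) = 1 ∧ l1 (β - restr S β) ≤ L ∧
    x = S.card * nsq n (fvec ψ (restr S β) - fvec ψ (β - restr S β))}

/-- Covering number `N(δ, F, ‖·‖ₙ)`. -/
def covN (n : ℕ) (δ : ℝ) (F : Set (Fin n → ℝ)) : ℕ :=
  sInf {N : ℕ | ∃ g : Fin N → (Fin n → ℝ), ∀ f ∈ F, ∃ k, nnorm n (f - g k) ≤ δ}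

theorem stmt12 {n p : ℕ} (hn : 1 ≤ n) (hp : 1 ≤ p)
    (ψ : Fin p → Fin n → ℝ) (hψ : ∀ j, nnorm n (ψ j) = 1)
    (u : ℝ) (hu : 0 < u) (J : Finset (Fin p))
    (hpack : ∀ k ∈ J, ∀ l ∈ J, k ≠ l → u ≤ nnorm n (ψ k - ψ l))
    (hmaxpack : ∀ j : Fin p, j ∉ J → ∃ k ∈ J, nnorm n (ψ j - ψ k) < u)
    (S : Finset (Fin p)) (hJS : J ⊆ S) (hSne : S ≠ Finset.univ)
    (L : ℝ) (hL : 1 ≤ L) :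
    phiSq ψ L S ≤ S.card * u ^ 2 := by
  -- pick j ∉ S
  obtain ⟨j, hjS⟩ : ∃ j : Fin p, j ∉ S := by
    by_contra h
    push_neg at h
    exact hSne (Finset.eq_univ_iff_forall.2 h)
  have hjJ : j ∉ J := fun h => hjS (hJS h)
  obtain ⟨k, hkJ, hk⟩ := hmaxpack j hjJ
  have hkS : k ∈ S := hJS hkJ
  have hkj : k ≠ j := fun h => hjS (h ▸ hkS)
  set β : Fin p → ℝ := fun m => if m = k then 1 else if m = j then 1 else 0 with hβ
  have hrestr : restr S β = fun m => if m = k then 1 else 0 := by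
    funext m
    simp only [restr, hβ]
    by_cases hmk : m = k
    · simp [hmk, hkS]
    · by_cases hmj : m = j
      · subst hmj; simp [hjS, hmk]
      · simp [hmk, hmj]
  have hrest2 : β - restr S β = fun m => if m = j then 1 else 0 := by
    funext m
    rw [Pi.sub_apply, hrestr]; simp only [hβ]
    by_cases hmk : m = k
    · simp [hmk, hkj]
    · by_cases hmj : m = j <;> simp [hmk, hmj, Ne.symm hkj]
  have hl1 : ∀ a : Fin p, l1 (fun m => if m = a then (1:ℝ) else 0) = 1 := by
    intro a
    simp [l1, apply_ite abs]
  have hfvec : ∀ a : Fin p, fvec ψ (fun m => if m = a then (1:ℝ) else 0) = ψ a := by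
    intro a
    funext i
    simp [fvec, ite_mul]
  have hmem : (S.card : ℝ) * nsq n (fvec ψ (restr S β) - fvec ψ (β - restr S β))
      ∈ {x : ℝ | ∃ β : Fin p → ℝ, l1 (restr S β) = 1 ∧ l1 (β - restr S β) ≤ L ∧
        x = S.card * nsq n (fvec ψ (restr S β) - fvec ψ (β - restr S β))} := by
    refine ⟨β, ?_, ?_, rfl⟩
    · rw [hrestr]; exact hl1 k
    · rw [hrest2, hl1 j]; exact hL
  have hbdd : BddBelow {x : ℝ | ∃ β : Fin p → ℝ, l1 (restr S β) = 1 ∧ l1 (β - restr S β) ≤ L ∧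
      x = S.card * nsq n (fvec ψ (restr S β) - fvec ψ (β - restr S β))} := by
    refine ⟨0, fun x hx => ?_⟩
    obtain ⟨γ, -, -, rfl⟩ := hx
    have : 0 ≤ nsq n (fvec ψ (restr S γ) - fvec ψ (γ - restr S γ)) := by
      apply div_nonneg _ (Nat.cast_nonneg n)
      exact Finset.sum_nonneg fun i _ => sq_nonneg _
    positivity
  have hle := csInf_le hbdd hmem
  refine le_trans hle ?_
  rw [hrest2, hrestr, hfvec, hfvec]
  have h1 : nsq n (ψ k - ψ j) ≤ u ^ 2 := by
    have h0 : 0 ≤ nsq n (ψ k - ψ j) := by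
      apply div_nonneg _ (Nat.cast_nonneg n)
      exact Finset.sum_nonneg fun i _ => sq_nonneg _
    have h2 : nnorm n (ψ k - ψ j) ≤ u := by
      have heq : nsq n (ψ k - ψ j) = nsq n (ψ j - ψ k) := by
        simp only [nsq]
        congr 1
        apply Finset.sum_congr rfl
        intro i _
        simp only [Pi.sub_apply]
        ring
      rw [nnorm, heq]
      exact le_of_lt hk
    calc nsq n (ψ k - ψ j) = (Real.sqrt (nsq n (ψ k - ψ j)))^2 := (Real.sq_sqrt h0).symm
      _ ≤ u ^ 2 := by
          apply pow_le_pow_left₀ (Real.sqrt_nonneg _) h2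
  exact mul_le_mul_of_nonneg_left h1 (Nat.cast_nonneg _)
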